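/- Define f(r) = (1/2)·sin(2r)/√(cos²r + 4sin²r) on (0, π/2). Then the image of the function r ↦ -f''(r)/f(r) on (0, π/2) is the open interval (7/4, 13), and the image of the function r ↦ (1 - f'(r)²)/f(r)² on (0, π/2) is the interval [9, ∞). -/

import Mathlib

open Real Set

noncomputable def Sq (r : ℝ) : ℝ := Real.sqrt (1 + 3 * Real.sin r ^ 2)

lemma hgpos (r : ℝ) : 0 < 1 + 3 * Real.sin r ^ 2 := by positivity
lemma hSpos (r : ℝ) : 0 < Sq r := Real.sqrt_pos.2 (hgpos r)
lemma hSsq (r : ℝ) : Sq r ^ 2 = 1 + 3 * Real.sin r ^ 2 := Real.sq_sqrt (hgpos r).le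

lemma hasDerivS (r : ℝ) : HasDerivAt Sq (6 * Real.sin r * Real.cos r / (2 * Sq r)) r := by
  have h : HasDerivAt (fun r => 1 + 3 * Real.sin r ^ 2) (6 * Real.sin r * Real.cos r) r := by
    have := ((Real.hasDerivAt_sin r).pow 2).const_mul 3
    have h2 := (hasDerivAt_const r (1:ℝ)).add this
    exact h2.congr_deriv (by push_cast; ring)
  exact h.sqrt (hgpos r).ne'

lemma hasDeriv1 (r : ℝ) :
    HasDerivAt (fun r => Real.sin r * Real.cos r / Sq r)
      ((1 + Real.sin r ^ 2) * (1 - 3 * Real.sin r ^ 2) / (Sq r) ^ 3) r := by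
  have h1 : HasDerivAt (fun r => Real.sin r * Real.cos r)
      (Real.cos r ^ 2 - Real.sin r ^ 2) r := by
    have := (Real.hasDerivAt_sin r).mul (Real.hasDerivAt_cos r)
    exact this.congr_deriv (by ring)
  have h4 := h1.div (hasDerivS r) (hSpos r).ne'
  refine h4.congr_deriv ?_
  have hS := hSsq r
  have hc : Real.cos r ^ 2 = 1 - Real.sin r ^ 2 := by
    nlinarith [Real.sin_sq_add_cos_sq r]
  field_simp [(hSpos r).ne']
  linear_combination (2*(Real.cos r^2-Real.sin r^2)) * hS + 2 * hc

lemma hasDeriv2 (r : ℝ) :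
    HasDerivAt (fun r => (1 + Real.sin r ^ 2) * (1 - 3 * Real.sin r ^ 2) / (Sq r) ^ 3)
      (-(Real.sin r * Real.cos r) * (13 + 6 * Real.sin r ^ 2 + 9 * Real.sin r ^ 4) / (Sq r) ^ 5)
      r := by
  have hA : HasDerivAt (fun r => 1 + Real.sin r ^ 2) (2 * Real.sin r * Real.cos r) r := by
    have := (hasDerivAt_const r (1:ℝ)).add ((Real.hasDerivAt_sin r).pow 2)
    exact this.congr_deriv (by push_cast; ring)
  have hB : HasDerivAt (fun r => 1 - 3 * Real.sin r ^ 2) (-(6 * Real.sin r * Real.cos r)) r := by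
    have := (hasDerivAt_const r (1:ℝ)).sub (((Real.hasDerivAt_sin r).pow 2).const_mul 3)
    exact this.congr_deriv (by push_cast; ring)
  have hN := hA.mul hB
  have hD := (hasDerivS r).pow 3
  have h := hN.div hD (pow_ne_zero _ (hSpos r).ne')
  refine h.congr_deriv ?_
  simp only [Pi.pow_apply, Pi.mul_apply, Nat.cast_ofNat]
  have hS := hSsq r
  have hc : Real.cos r ^ 2 = 1 - Real.sin r ^ 2 := by
    nlinarith [Real.sin_sq_add_cos_sq r]
  field_simp [(hSpos r).ne']
  linear_combination (-8*Real.sin r*Real.cos r*(1+3*Real.sin r^2)*Sq r^2) * hS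

noncomputable def Afun (r : ℝ) : ℝ := 1 + 12 / (1 + 3 * Real.sin r ^ 2) ^ 2

noncomputable def Kfun (r : ℝ) : ℝ :=
  (13 + 29 * Real.sin r ^ 2 + 15 * Real.sin r ^ 4 - 9 * Real.sin r ^ 6) /
    ((1 + 3 * Real.sin r ^ 2) ^ 2 * (1 - Real.sin r ^ 2))

lemma mem_facts {r : ℝ} (hr : r ∈ Set.Ioo 0 (Real.pi/2)) :
    0 < Real.sin r ∧ 0 < Real.cos r ∧ Real.sin r ^ 2 < 1 := by
  obtain ⟨h0, h1⟩ := hr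
  have hs : 0 < Real.sin r := Real.sin_pos_of_pos_of_lt_pi h0 (by linarith [Real.pi_pos])
  have hc : 0 < Real.cos r := Real.cos_pos_of_mem_Ioo ⟨by linarith [Real.pi_pos], h1⟩
  exact ⟨hs, hc, by nlinarith [Real.sin_sq_add_cos_sq r]⟩

lemma imageA : Afun '' Set.Ioo 0 (Real.pi/2) = Set.Ioo (7/4 : ℝ) 13 := by
  apply Set.Subset.antisymm
  · rintro _ ⟨r, hr, rfl⟩
    obtain ⟨hs, hc, hs1⟩ := mem_facts hr
    have hX : (0:ℝ) < (1 + 3 * Real.sin r ^ 2) ^ 2 := by positivity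
    constructor
    · have h16 : (1 + 3 * Real.sin r ^ 2) ^ 2 < 16 := by nlinarith
      have := div_lt_div_of_pos_left (by norm_num : (0:ℝ) < 12) hX h16
      unfold Afun; norm_num at this ⊢; linarith
    · have h1 : (1:ℝ) < (1 + 3 * Real.sin r ^ 2) ^ 2 := by nlinarith
      have := div_lt_div_of_pos_left (by norm_num : (0:ℝ) < 12) one_pos h1
      unfold Afun; norm_num at this ⊢; linarith
  · have hcont : ContinuousOn Afun (Set.Icc 0 (Real.pi/2)) := by
      apply ContinuousOn.add continuousOn_const
      apply ContinuousOn.div continuousOn_const (by fun_prop)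
      intro x _; positivity
    have h := intermediate_value_Ioo' (by linarith [Real.pi_pos] : (0:ℝ) ≤ Real.pi/2) hcont
    have e1 : Afun 0 = 13 := by simp [Afun]; norm_num
    have e2 : Afun (Real.pi/2) = 7/4 := by simp [Afun, Real.sin_pi_div_two]; norm_num
    rw [e1, e2] at h
    exact h

lemma imageK : Kfun '' Set.Ioo 0 (Real.pi/2) = Set.Ici (9 : ℝ) := by
  apply Set.Subset.antisymm
  · rintro _ ⟨r, hr, rfl⟩
    obtain ⟨hs, hc, hs1⟩ := mem_facts hr
    have hd : (0:ℝ) < (1 + 3 * Real.sin r ^ 2) ^ 2 * (1 - Real.sin r ^ 2) := by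
      have : (0:ℝ) < 1 - Real.sin r ^ 2 := by linarith
      positivity
    rw [Set.mem_Ici, Kfun, le_div_iff₀ hd]
    nlinarith [mul_nonneg (sq_nonneg (3 * Real.sin r ^ 2 - 1))
      (by positivity : (0:ℝ) ≤ 2 * Real.sin r ^ 2 + 1)]
  · intro y hy
    rw [Set.mem_Ici] at hy
    have hy0 : (0:ℝ) < y := by linarith
    set s1 : ℝ := max (2/3) (1 - 13/(16*y)) with hs1def
    have hs1a : 2/3 ≤ s1 := le_max_left _ _
    have hs1b : s1 < 1 := by
      apply max_lt (by norm_num)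
      have : (0:ℝ) < 13/(16*y) := by positivity
      linarith
    have hs1c : 1 - s1 ≤ 13/(16*y) := by
      have := le_max_right (2/3 : ℝ) (1 - 13/(16*y)); linarith
    have hs1pos : (0:ℝ) ≤ s1 := by linarith
    set r0 : ℝ := Real.arcsin (Real.sqrt (1/3)) with hr0def
    set r1 : ℝ := Real.arcsin (Real.sqrt s1) with hr1def
    have hsin0 : Real.sin r0 ^ 2 = 1/3 := by
      rw [hr0def, Real.sin_arcsin (by linarith [Real.sqrt_nonneg (1/3:ℝ)]) (by
        rw [show (1:ℝ) = Real.sqrt 1 from (Real.sqrt_one).symm]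
        exact Real.sqrt_le_sqrt (by norm_num))]
      exact Real.sq_sqrt (by norm_num)
    have hsq1 : Real.sqrt s1 < 1 := by
      rw [show (1:ℝ) = Real.sqrt 1 from (Real.sqrt_one).symm]
      exact Real.sqrt_lt_sqrt hs1pos (by linarith)
    have hsin1 : Real.sin r1 ^ 2 = s1 := by
      rw [hr1def, Real.sin_arcsin (by linarith [Real.sqrt_nonneg s1]) hsq1.le]
      exact Real.sq_sqrt hs1pos
    have hr0pos : 0 < r0 := Real.arcsin_pos.2 (by positivity)
    have hr1lt : r1 < Real.pi/2 := Real.arcsin_lt_pi_div_two.2 hsq1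
    have hr01 : r0 ≤ r1 := Real.monotone_arcsin (Real.sqrt_le_sqrt (by linarith))
    have hsub : Set.Icc r0 r1 ⊆ Set.Ioo 0 (Real.pi/2) := fun x hx =>
      ⟨lt_of_lt_of_le hr0pos hx.1, lt_of_le_of_lt hx.2 hr1lt⟩
    have hcont : ContinuousOn Kfun (Set.Icc r0 r1) := by
      apply ContinuousOn.div (by fun_prop) (by fun_prop)
      intro x hx
      obtain ⟨_, _, hx1⟩ := mem_facts (hsub hx)
      have h1 : (0:ℝ) < 1 - Real.sin x ^ 2 := by linarith
      positivity
    have h := intermediate_value_Icc hr01 hcont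
    have e0 : Kfun r0 = 9 := by
      rw [Kfun, hsin0, show Real.sin r0 ^ 4 = (1/3:ℝ)^2 by
        rw [show (4:ℕ) = 2*2 from rfl, pow_mul, hsin0],
        show Real.sin r0 ^ 6 = (1/3:ℝ)^3 by rw [show (6:ℕ) = 2*3 from rfl, pow_mul, hsin0]]
      norm_num
    have e1 : y ≤ Kfun r1 := by
      rw [Kfun, hsin1, show Real.sin r1 ^ 4 = s1^2 by rw [show (4:ℕ) = 2*2 from rfl, pow_mul, hsin1],
        show Real.sin r1 ^ 6 = s1^3 by rw [show (6:ℕ) = 2*3 from rfl, pow_mul, hsin1]]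
      have hd : (0:ℝ) < (1 + 3 * s1) ^ 2 * (1 - s1) := by
        have : (0:ℝ) < 1 - s1 := by linarith
        positivity
      rw [le_div_iff₀ hd]
      have h16 : (1 - s1) * (16 * y) ≤ 13 := by
        rw [← le_div_iff₀ (by positivity)]
        exact hs1c
      have e2 : (1 + 3*s1)^2 ≤ 16 := by nlinarith
      have e3 : (0:ℝ) ≤ y * (1 - s1) := mul_nonneg hy0.le (by linarith)
      nlinarith [mul_nonneg e3 (by linarith : (0:ℝ) ≤ 16 - (1 + 3*s1)^2)]
    have : y ∈ Set.Icc (Kfun r0) (Kfun r1) := ⟨by rw [e0]; exact hy, e1⟩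
    exact Set.image_mono hsub (h this)


/-- For the warping function `f(r) = (1/2)·sin(2r)/√(cos²r + 4sin²r)` of the orbit
space of the `SU(2)`-representation `ℂ² ⊕ ℝ³`, the image of `-f''/f` on `(0, π/2)`
is the open interval `(7/4, 13)`, and the image of `(1 - f'²)/f²` is `[9, ∞)`. -/
theorem stmt4 (f : ℝ → ℝ)
    (hf : ∀ r, f r = (1/2) * Real.sin (2*r) /
      Real.sqrt (Real.cos r ^ 2 + 4 * Real.sin r ^ 2)) :
    (fun r => -(deriv (deriv f) r) / f r) '' Set.Ioo 0 (Real.pi/2)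
      = Set.Ioo (7/4 : ℝ) 13 ∧
    (fun r => (1 - (deriv f r)^2) / (f r)^2) '' Set.Ioo 0 (Real.pi/2)
      = Set.Ici (9 : ℝ) := by
  have hf2 : f = fun r => Real.sin r * Real.cos r / Sq r := by
    funext r
    rw [hf r, Real.sin_two_mul, Sq,
      show Real.cos r ^ 2 + 4 * Real.sin r ^ 2 = 1 + 3 * Real.sin r ^ 2 by
        nlinarith [Real.sin_sq_add_cos_sq r]]
    ring
  subst hf2
  have hd1 : deriv (fun r => Real.sin r * Real.cos r / Sq r)
      = fun r => (1 + Real.sin r ^ 2) * (1 - 3 * Real.sin r ^ 2) / (Sq r) ^ 3 :=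
    funext fun r => (hasDeriv1 r).deriv
  rw [hd1]
  have hd2 : ∀ r, deriv (fun r => (1 + Real.sin r ^ 2) * (1 - 3 * Real.sin r ^ 2) / (Sq r) ^ 3) r
      = -(Real.sin r * Real.cos r) * (13 + 6 * Real.sin r ^ 2 + 9 * Real.sin r ^ 4) / (Sq r) ^ 5 :=
    fun r => (hasDeriv2 r).deriv
  constructor
  · rw [← imageA]
    apply Set.image_congr
    intro r hr
    obtain ⟨hs, hc, hs1⟩ := mem_facts hr
    have hS := hSsq r
    have hSp := hSpos r
    simp only [hd2 r, Afun]
    have hg : (0:ℝ) < 1 + 3 * Real.sin r ^ 2 := hgpos r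
    field_simp
    linear_combination (-(Sq r^2 + (1+3*Real.sin r^2)) * ((1+3*Real.sin r^2)^2+12)) * hS
  · rw [← imageK]
    apply Set.image_congr
    intro r hr
    obtain ⟨hs, hc, hs1⟩ := mem_facts hr
    have hS := hSsq r
    have hSp := hSpos r
    simp only [Kfun]
    have hg : (0:ℝ) < 1 + 3 * Real.sin r ^ 2 := hgpos r
    have h1 : (0:ℝ) < 1 - Real.sin r ^ 2 := by linarith
    have hc2 : Real.cos r ^ 2 = 1 - Real.sin r ^ 2 := by
      nlinarith [Real.sin_sq_add_cos_sq r]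
    field_simp
    rw [show Sq r ^ 6 = ((1:ℝ) + 3 * Real.sin r ^ 2) ^ 3 by
      rw [show Sq r ^ 6 = (Sq r ^ 2) ^ 3 by ring, hS],
      show Sq r ^ 4 = ((1:ℝ) + 3 * Real.sin r ^ 2) ^ 2 by
      rw [show Sq r ^ 4 = (Sq r ^ 2) ^ 2 by ring, hS]]
    linear_combination (-(13 + 29*Real.sin r^2 + 15*Real.sin r^4 - 9*Real.sin r^6) *
      (1+3*Real.sin r^2)^2 * Real.sin r^2) * hc2
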